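/- Let G = (V, E, L) be a colored directed graph with V finite, |V| = m, such that the auxiliary graph G² is acyclic (no walk in G² revisits a node) and G has no same-colored out-neighbors (for all v, w₁, w₂: if E(v, w₁), E(v, w₂), and L(w₁) = L(w₂), then w₁ = w₂). Then G is observable with burn-in time T = m²: for any two paths xและ x′ of length n ≥ m² with the same color sequence (L(x(i)) = L(x′(i)) for all 0 ≤ i ≤ n), one has x(s) = x′(s) for every index s with m² ≤ s ≤ n; that is, the current node is unambiguously determined by the observed colors once at least T observations have been made. -/

import Mathlib

/-- Edge relation of the auxiliary graph `G²` of a colored directed graph `(V, E, L)`: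
its nodes are the ordered pairs of *distinct* nodes of `G`, and there is an edge from
`(v₁, v₂)` to `(v₁', v₂')` iff `E v₁ v₁'`, `E v₂ v₂'`, and `L v₁' = L v₂'`. -/
def G2Edge {V Φ : Type*} (E : V → V → Prop) (L : V → Φ) :
    V × V → V × V → Prop :=
  fun p q => p.1 ≠ p.2 ∧ q.1 ≠ q.2 ∧ E p.1 q.1 ∧ E p.2 q.2 ∧ L q.1 = L q.2

/-- Modular arithmetic helper for unrolling a cycle into a periodic `ℤ`-indexed walk. -/
lemma mod_succ_toNat (p : ℕ) (hp : 0 < p) (k : ℤ) :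
    ((k + 1) % (p : ℤ)).toNat = ((k % (p : ℤ)).toNat + 1) % p := by
  have hp' : (0 : ℤ) < (p : ℤ) := by exact_mod_cast hp
  have h1 : 0 ≤ k % (p : ℤ) := Int.emod_nonneg k hp'.ne'
  set t := (k % (p : ℤ)).toNat with htdef
  have ht : (t : ℤ) = k % (p : ℤ) := Int.toNat_of_nonneg h1
  have hk : k = (t : ℤ) + (p : ℤ) * (k / (p : ℤ)) := by
    rw [ht]; rw [Int.emod_add_mul_ediv k (p : ℤ)]
  have h2 : (k + 1) % (p : ℤ) = ((t : ℤ) + 1) % (p : ℤ) := by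
    conv_lhs => rw [hk]
    rw [show (t : ℤ) + (p : ℤ) * (k / (p : ℤ)) + 1
        = ((t : ℤ) + 1) + ((p : ℤ)) * (k / (p : ℤ)) by ring]
    exact Int.add_mul_emod_self_left (a := (t : ℤ) + 1) (b := (p : ℤ)) (c := k / (p : ℤ))
  rw [h2]
  have : ((t : ℤ) + 1) % (p : ℤ) = (((t + 1) % p : ℕ) : ℤ) := by
    push_cast; ring_nf
  rw [this, Int.toNat_natCast]

/-- If `V` is finite with `m` nodes, the auxiliary graph `G²` is acyclic (no periodic
cycle), and `G` has no same-colored out-neighbors, then `G` is observable with burn-in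
time `T = m²`: any two paths of length `n ≥ m²` with the same color sequence agree at
every index `s` with `m² ≤ s ≤ n`. -/
theorem observable_with_burn_in_time
    {V Φ : Type*} [Fintype V] (E : V → V → Prop) (L : V → Φ)
    (m : ℕ) (hm : Fintype.card V = m)
    (hacyc : ¬ ∃ γ : ℤ → V × V,
      (∀ i, G2Edge E L (γ i) (γ (i + 1))) ∧ ∃ p : ℤ, 0 < p ∧ ∀ i, γ (i + p) = γ i)
    (hsu : ∀ v w₁ w₂ : V, E v w₁ → E v w₂ → L w₁ = L w₂ → w₁ = w₂)
    (n : ℕ) (hn : m ^ 2 ≤ n) (x x' : ℕ → V)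
    (hx : ∀ i < n, E (x i) (x (i + 1)))
    (hx' : ∀ i < n, E (x' i) (x' (i + 1)))
    (hcol : ∀ i ≤ n, L (x i) = L (x' i)) :
    ∀ s, m ^ 2 ≤ s → s ≤ n → x s = x' s := by
  intro s hs hsn
  by_contra hne
  -- equality propagates forward
  have claim : ∀ j, j ≤ n → ∀ i ≤ j, x i = x' i → x j = x' j := by
    intro j
    induction j with
    | zero =>
      intro _ i hi he
      have : i = 0 := Nat.le_zero.mp hi
      exact this ▸ he
    | succ j ih =>
      intro hj i hi he
      rcases Nat.lt_or_ge i (j + 1) with h | h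
      · have hjn : j < n := hj
        have hjj : x j = x' j := ih (le_of_lt hj) i (Nat.lt_succ_iff.mp h) he
        exact hsu (x j) (x (j + 1)) (x' (j + 1)) (hx j hjn)
          (hjj ▸ hx' j hjn) (hcol (j + 1) hj)
      · have : i = j + 1 := le_antisymm hi h
        exact this ▸ he
  have hfwd : ∀ i ≤ s, x i ≠ x' i := fun i hi he => hne (claim s hsn i hi he)
  set w : ℕ → V × V := fun k => (x k, x' k) with hw
  have hedge : ∀ k < s, G2Edge E L (w k) (w (k + 1)) := by
    intro k hk
    have hk' : k < n := lt_of_lt_of_le hk hsn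
    exact ⟨hfwd k (le_of_lt hk), hfwd (k + 1) hk, hx k hk', hx' k hk', hcol (k + 1) hk'⟩
  -- pigeonhole over the indices 0, …, m²
  have hcard : Fintype.card (V × V) < Fintype.card (Fin (m ^ 2 + 1)) := by
    simp [hm, pow_two]
  obtain ⟨a, b, hab, hwab⟩ := Fintype.exists_ne_map_eq_of_card_lt
    (fun k : Fin (m ^ 2 + 1) => w (k : ℕ)) hcard
  wlog hlt : (a : ℕ) < (b : ℕ) generalizing a b
  · exact this b a hab.symm hwab.symm
      (lt_of_le_of_ne (Nat.le_of_not_lt hlt) (fun h => hab (Fin.ext h.symm)))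
  set p : ℕ := (b : ℕ) - (a : ℕ) with hp
  have hppos : 0 < p := by omega
  have hbs : (b : ℕ) ≤ s := by have := b.isLt; omega
  have hap : (a : ℕ) + p = (b : ℕ) := by omega
  have hper0 : w ((a : ℕ) + p) = w (a : ℕ) := by rw [hap]; exact hwab.symm
  -- the cyclic walk in G²
  set f : ℕ → V × V := fun r => w ((a : ℕ) + r % p) with hf
  have hfmod : ∀ r, f (r % p) = f r := by
    intro r; simp only [hf, Nat.mod_mod_of_dvd r (dvd_refl p)]
  have hfsucc : ∀ r, f (r + 1) = w ((a : ℕ) + r % p + 1) := by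
    intro r
    have hr : r % p < p := Nat.mod_lt _ hppos
    have hmod : (r + 1) % p = (r % p + 1) % p := by
      conv_lhs => rw [← Nat.mod_add_div r p]
      rw [show r % p + p * (r / p) + 1 = (r % p + 1) + p * (r / p) by ring,
        Nat.add_mul_mod_self_left]
    rcases Nat.lt_or_ge (r % p + 1) p with h | h
    · simp only [hf, hmod, Nat.mod_eq_of_lt h, ← Nat.add_assoc]
    · have hp1 : r % p + 1 = p := by omega
      have : (r % p + 1) % p = 0 := by rw [hp1, Nat.mod_self]
      simp only [hf, hmod, this, Nat.add_zero]
      rw [show (a : ℕ) + r % p + 1 = (a : ℕ) + p by omega]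
      exact hper0.symm
  have hedgef : ∀ r, G2Edge E L (f r) (f (r + 1)) := by
    intro r
    have hr : r % p < p := Nat.mod_lt _ hppos
    have hlt' : (a : ℕ) + r % p < s := by omega
    rw [hfsucc r]
    exact hedge _ hlt'
  -- unroll to a periodic ℤ-indexed walk, contradicting acyclicity
  apply hacyc
  refine ⟨fun k => f ((k % (p : ℤ)).toNat), ?_, (p : ℤ), by exact_mod_cast hppos, ?_⟩
  · intro k
    show G2Edge E L (f ((k % (p : ℤ)).toNat)) (f (((k + 1) % (p : ℤ)).toNat))
    rw [mod_succ_toNat p hppos k, hfmod]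
    exact hedgef _
  · intro k
    show f (((k + (p : ℤ)) % (p : ℤ)).toNat) = f ((k % (p : ℤ)).toNat)
    rw [Int.add_emod_right]
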